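/- Suppose (X_n) in E_1 and (Y_n) in E_2 are random elements of Polish spaces such that the families (P_{X_n}) and (P_{Y_n}) are tight. If (X_n, Y_n) satisfy AI-0 (E[f(X_n)g(Y_n)] − E f(X_n)·E g(Y_n) → 0 for all bounded uniformly continuous f, g), then they satisfy AI-1: for all bounded uniformly continuous h : E_1 × E_2 → ℝ, E h(X_n, Y_n) − ∫ h d(P_{X_n} × P_{Y_n}) → 0. -/

import Mathlib

open MeasureTheory Filter Metric Set

namespace Stmt17Aux

/-- Bounded uniformly continuous real function. -/
def BUC {E : Type*} [MetricSpace E] (f : E → ℝ) : Prop :=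
  UniformContinuous f ∧ ∃ C, 0 ≤ C ∧ ∀ x, |f x| ≤ C

variable {E : Type*} [MetricSpace E]

lemma BUC.const (c : ℝ) : BUC (fun _ : E => c) :=
  ⟨uniformContinuous_const, |c|, abs_nonneg c, fun _ => le_refl _⟩

lemma BUC.mul {f g : E → ℝ} (hf : BUC f) (hg : BUC g) : BUC (fun x => f x * g x) := by
  obtain ⟨hfu, Cf, hCf0, hCf⟩ := hf
  obtain ⟨hgu, Cg, hCg0, hCg⟩ := hg
  constructor
  · rw [Metric.uniformContinuous_iff] at hfu hgu ⊢
    intro ε hε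
    obtain ⟨δ₁, hδ₁, H₁⟩ := hfu (ε / (2 * (Cg + 1))) (by positivity)
    obtain ⟨δ₂, hδ₂, H₂⟩ := hgu (ε / (2 * (Cf + 1))) (by positivity)
    refine ⟨min δ₁ δ₂, lt_min hδ₁ hδ₂, fun {a b} hab => ?_⟩
    have h1 := H₁ (lt_of_lt_of_le hab (min_le_left _ _))
    have h2 := H₂ (lt_of_lt_of_le hab (min_le_right _ _))
    rw [Real.dist_eq] at h1 h2 ⊢
    have e1 : |f a * g a - f b * g b| ≤ |f a| * |g a - g b| + |f a - f b| * |g b| := by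
      calc |f a * g a - f b * g b| = |f a * (g a - g b) + (f a - f b) * g b| := by ring_nf
        _ ≤ |f a * (g a - g b)| + |(f a - f b) * g b| := abs_add_le _ _
        _ = |f a| * |g a - g b| + |f a - f b| * |g b| := by rw [abs_mul, abs_mul]
    have hfa := hCf a
    have hgb := hCg b
    have p1 : |f a| * |g a - g b| ≤ Cf * (ε / (2 * (Cf + 1))) :=
      mul_le_mul hfa h2.le (abs_nonneg _) hCf0
    have p2 : |f a - f b| * |g b| ≤ (ε / (2 * (Cg + 1))) * Cg :=
      mul_le_mul h1.le hgb (abs_nonneg _) (by positivity)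
    have key : ∀ C : ℝ, 0 ≤ C → C * (ε / (2 * (C + 1))) < ε / 2 := by
      intro C hC
      rw [mul_div_assoc', div_lt_div_iff₀ (by positivity) (by norm_num : (0:ℝ) < 2)]
      nlinarith
    have q1 := key Cf hCf0
    have q2 : (ε / (2 * (Cg + 1))) * Cg < ε / 2 := by
      rw [mul_comm]; exact key Cg hCg0
    linarith
  · exact ⟨Cf * Cg, by positivity, fun x => by
      rw [abs_mul]; exact mul_le_mul (hCf x) (hCg x) (abs_nonneg _) hCf0⟩


lemma buc_min_dist (c : E) : BUC (fun a : E => min (dist a c) 1) := by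
  refine ⟨?_, 1, zero_le_one, fun x => ?_⟩
  · exact lipschitzWith_min.uniformContinuous.comp
      ((UniformContinuous.dist uniformContinuous_id uniformContinuous_const).prodMk
        uniformContinuous_const)
  · rw [abs_of_nonneg (le_min dist_nonneg zero_le_one)]
    exact min_le_right _ _

/-- Stone–Weierstrass tensor approximation on a product of compact sets. -/
lemma tensor_approx {E₁ E₂ : Type*} [MetricSpace E₁] [MetricSpace E₂]
    {K₁ : Set E₁} {K₂ : Set E₂} (hK₁ : IsCompact K₁) (hK₂ : IsCompact K₂)
    (h : E₁ × E₂ → ℝ) (hc : Continuous h) {ε : ℝ} (hε : 0 < ε) :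
    ∃ (m : ℕ) (f : Fin m → E₁ → ℝ) (g : Fin m → E₂ → ℝ),
      (∀ i, BUC (f i)) ∧ (∀ i, BUC (g i)) ∧
      ∀ x ∈ K₁, ∀ y ∈ K₂, |h (x, y) - ∑ i, f i x * g i y| ≤ ε := by
  haveI : CompactSpace ↥K₁ := isCompact_iff_compactSpace.mp hK₁
  haveI : CompactSpace ↥K₂ := isCompact_iff_compactSpace.mp hK₂
  set T : Set C(↥K₁ × ↥K₂, ℝ) :=
    {F | ∃ (f : E₁ → ℝ) (g : E₂ → ℝ), BUC f ∧ BUC g ∧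
      ∀ p : ↥K₁ × ↥K₂, F p = f p.1.1 * g p.2.1} with hT
  have hTmul : ∀ F ∈ T, ∀ G ∈ T, F * G ∈ T := by
    rintro F ⟨f₁, g₁, hf₁, hg₁, hF⟩ G ⟨f₂, g₂, hf₂, hg₂, hG⟩
    exact ⟨fun a => f₁ a * f₂ a, fun b => g₁ b * g₂ b, hf₁.mul hf₂, hg₁.mul hg₂,
      fun p => by simp [hF p, hG p]; ring⟩
  have hone : (1 : C(↥K₁ × ↥K₂, ℝ)) ∈ T :=
    ⟨fun _ => 1, fun _ => 1, BUC.const 1, BUC.const 1, fun p => by simp⟩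
  let A : Subalgebra ℝ C(↥K₁ × ↥K₂, ℝ) :=
    { carrier := Submodule.span ℝ T
      mul_mem' := by
        intro a b ha hb
        have hle : Submodule.span ℝ T * Submodule.span ℝ T ≤ Submodule.span ℝ T := by
          rw [Submodule.span_mul_span]
          refine Submodule.span_le.mpr (Set.mul_subset_iff.mpr ?_)
          exact fun x hx y hy => Submodule.subset_span (hTmul x hx y hy)
        exact hle (Submodule.mul_mem_mul ha hb)
      one_mem' := Submodule.subset_span hone
      add_mem' := fun ha hb => Submodule.add_mem _ ha hb
      zero_mem' := Submodule.zero_mem _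
      algebraMap_mem' := fun r => by
        rw [Algebra.algebraMap_eq_smul_one]
        exact Submodule.smul_mem _ r (Submodule.subset_span hone) }
  have hsep : A.SeparatesPoints := by
    rintro ⟨x₁, y₁⟩ ⟨x₂, y₂⟩ hne
    have : x₁ ≠ x₂ ∨ y₁ ≠ y₂ := by
      by_contra hcon
      push_neg at hcon
      exact hne (Prod.ext hcon.1 hcon.2)
    rcases this with hx | hy
    · have hxx : (x₁ : E₁) ≠ (x₂ : E₁) := fun hc => hx (Subtype.ext hc)
      refine ⟨_, ⟨ContinuousMap.mk (fun p : ↥K₁ × ↥K₂ => min (dist (p.1 : E₁) (x₂ : E₁)) 1)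
        (by fun_prop), Submodule.subset_span
          ⟨fun a => min (dist a (x₂ : E₁)) 1, fun _ => 1, buc_min_dist _, BUC.const 1,
            fun p => by simp⟩, rfl⟩, ?_⟩
      simp only [ContinuousMap.coe_mk]
      have h1 : min (dist (x₁ : E₁) (x₂ : E₁)) 1 > 0 :=
        lt_min (dist_pos.mpr hxx) one_pos
      have h2 : min (dist (x₂ : E₁) (x₂ : E₁)) 1 = 0 := by simp
      simp only [h2]
      exact ne_of_gt h1
    · have hyy : (y₁ : E₂) ≠ (y₂ : E₂) := fun hc => hy (Subtype.ext hc)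
      refine ⟨_, ⟨ContinuousMap.mk (fun p : ↥K₁ × ↥K₂ => min (dist (p.2 : E₂) (y₂ : E₂)) 1)
        (by fun_prop), Submodule.subset_span
          ⟨fun _ => 1, fun b => min (dist b (y₂ : E₂)) 1, BUC.const 1, buc_min_dist _,
            fun p => by simp⟩, rfl⟩, ?_⟩
      simp only [ContinuousMap.coe_mk]
      have h1 : min (dist (y₁ : E₂) (y₂ : E₂)) 1 > 0 :=
        lt_min (dist_pos.mpr hyy) one_pos
      have h2 : min (dist (y₂ : E₂) (y₂ : E₂)) 1 = 0 := by simp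
      simp only [h2]
      exact ne_of_gt h1
  obtain ⟨⟨F, hFA⟩, hFnear⟩ :=
    ContinuousMap.exists_mem_subalgebra_near_continuous_of_separatesPoints A hsep
      (fun p : ↥K₁ × ↥K₂ => h (p.1.1, p.2.1))
      (hc.comp (by fun_prop)) ε hε
  have hFspan : F ∈ Submodule.span ℝ T := hFA
  rw [Submodule.mem_span_set'] at hFspan
  obtain ⟨m, c, v, hsum⟩ := hFspan
  choose fv gv hfv hgv hv using fun i => (v i).2
  refine ⟨m, fun i a => c i * fv i a, fun i => gv i, fun i => (BUC.const (c i)).mul (hfv i),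
    hgv, fun x hx y hy => ?_⟩
  have heval : F ⟨⟨x, hx⟩, ⟨y, hy⟩⟩ = ∑ i, c i * fv i x * gv i y := by
    rw [← hsum]
    have : ((∑ i, c i • (v i : C(↥K₁ × ↥K₂, ℝ))) : C(↥K₁ × ↥K₂, ℝ)) ⟨⟨x, hx⟩, ⟨y, hy⟩⟩
        = ∑ i, c i * ((v i : C(↥K₁ × ↥K₂, ℝ)) ⟨⟨x, hx⟩, ⟨y, hy⟩⟩) := by
      rw [ContinuousMap.coe_sum]
      simp [Finset.sum_apply]
    rw [this]
    refine Finset.sum_congr rfl fun i _ => ?_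
    rw [hv i ⟨⟨x, hx⟩, ⟨y, hy⟩⟩]
    ring
  have := hFnear ⟨⟨x, hx⟩, ⟨y, hy⟩⟩
  rw [Real.norm_eq_abs] at this
  rw [abs_sub_comm] at this
  calc |h (x, y) - ∑ i, c i * fv i x * gv i y|
      = |h (x, y) - F ⟨⟨x, hx⟩, ⟨y, hy⟩⟩| := by rw [heval]
    _ ≤ ε := this.le


lemma final_arith {U V B ε C D η : ℝ} (hε : 0 < ε) (hεhalf : ε ≤ 1/2)
    (hεη : 8*(2*C+3)*ε ≤ η) (hC0 : 0 ≤ C) (hD : D = 2*C + 2*ε)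
    (hA1 : |U| ≤ ε + D*(2*ε)) (hA2 : |V| ≤ ε + D*(2*ε)) (hB : |B| < η/2) :
    |U - V + B| < η := by
  have hq : ε*ε ≤ (1/2)*ε := by nlinarith
  have hCε : 0 ≤ C*ε := mul_nonneg hC0 hε.le
  have hD' : ε + D*(2*ε) = ε + 4*(C*ε) + 4*(ε*ε) := by rw [hD]; ring
  rw [hD'] at hA1 hA2
  have h16 : 16*(C*ε) + 24*ε ≤ η := by nlinarith [hεη]
  have htri : |U - V + B| ≤ |U| + |V| + |B| := by
    calc |U - V + B| ≤ |U - V| + |B| := abs_add_le _ _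
      _ ≤ (|U| + |V|) + |B| := by
          have h2 : |U - V| ≤ |U| + |V| := by
            rw [sub_eq_add_neg]
            exact (abs_add_le _ _).trans (by rw [abs_neg])
          linarith
  refine lt_of_le_of_lt htri ?_
  linarith

lemma integrable_of_bdd {α : Type*} [MeasurableSpace α] (μ : Measure α)
    [IsFiniteMeasure μ] {u : α → ℝ} (hm : AEStronglyMeasurable u μ) (C' : ℝ)
    (hb : ∀ a, |u a| ≤ C') : Integrable u μ :=
  (integrable_const C').mono' hm (ae_of_all _ fun a => by
    rw [Real.norm_eq_abs]; exact hb a)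

lemma abs_integral_le_of_bounds {α : Type*} [MeasurableSpace α] (μ : Measure α)
    [IsProbabilityMeasure μ] {u : α → ℝ} (hu : Integrable u μ) {G : Set α}
    (hG : MeasurableSet G) {ε D : ℝ} (hε : 0 ≤ ε) (hD : 0 ≤ D)
    (h1 : ∀ z ∈ G, |u z| ≤ ε) (h2 : ∀ z, |u z| ≤ D) :
    |∫ z, u z ∂μ| ≤ ε + D * (μ Gᶜ).toReal := by
  have hindint : Integrable (fun z => Gᶜ.indicator (fun _ => (1:ℝ)) z) μ :=
    (integrable_const 1).indicator hG.compl
  have hind : Integrable (fun z => ε + D * Gᶜ.indicator (fun _ => (1:ℝ)) z) μ :=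
    (integrable_const ε).add (hindint.const_mul D)
  have hpt : ∀ z, |u z| ≤ ε + D * Gᶜ.indicator (fun _ => (1:ℝ)) z := by
    intro z
    by_cases hz : z ∈ G
    · have he : Gᶜ.indicator (fun _ => (1:ℝ)) z = 0 :=
        Set.indicator_of_notMem (by simpa using hz) _
      rw [he]; simpa using h1 z hz
    · have he : Gᶜ.indicator (fun _ => (1:ℝ)) z = 1 :=
        Set.indicator_of_mem (by simpa using hz) _
      rw [he]
      calc |u z| ≤ D := h2 z
        _ ≤ ε + D * 1 := by linarith
  calc |∫ z, u z ∂μ| = ‖∫ z, u z ∂μ‖ := (Real.norm_eq_abs _).symm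
    _ ≤ ∫ z, ‖u z‖ ∂μ := norm_integral_le_integral_norm _
    _ = ∫ z, |u z| ∂μ := by simp [Real.norm_eq_abs]
    _ ≤ ∫ z, (ε + D * Gᶜ.indicator (fun _ => (1:ℝ)) z) ∂μ :=
        integral_mono hu.abs hind hpt
    _ = ε + D * (μ Gᶜ).toReal := by
        rw [integral_add (integrable_const ε) (hindint.const_mul D), integral_const,
          integral_const_mul, integral_indicator_const _ hG.compl]
        simp [measure_univ, Measure.real]

lemma compl_toReal_le {α : Type*} [MeasurableSpace α] (μ : Measure α) [IsProbabilityMeasure μ]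
    {S : Set α} (hS : MeasurableSet S) {ε : ℝ} (h : (μ S).toReal ≥ 1 - ε) :
    (μ Sᶜ).toReal ≤ ε := by
  rw [prob_compl_eq_one_sub hS, ENNReal.toReal_sub_of_le prob_le_one ENNReal.one_ne_top]
  simp only [ENNReal.toReal_one]
  linarith

end Stmt17Aux

open Stmt17Aux

theorem stmt_17 {Ω E₁ E₂ : Type*} [MeasurableSpace Ω]
    [MetricSpace E₁] [CompleteSpace E₁] [SecondCountableTopology E₁]
    [MeasurableSpace E₁] [BorelSpace E₁]
    [MetricSpace E₂] [CompleteSpace E₂] [SecondCountableTopology E₂]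
    [MeasurableSpace E₂] [BorelSpace E₂]
    (P : Measure Ω) [IsProbabilityMeasure P]
    (X : ℕ → Ω → E₁) (Y : ℕ → Ω → E₂)
    (hX : ∀ n, Measurable (X n)) (hY : ∀ n, Measurable (Y n))
    (htightX : ∀ ε : ℝ, 0 < ε → ∃ K : Set E₁, IsCompact K ∧
      ∀ n, (P {ω | X n ω ∈ K}).toReal ≥ 1 - ε)
    (htightY : ∀ ε : ℝ, 0 < ε → ∃ K : Set E₂, IsCompact K ∧
      ∀ n, (P {ω | Y n ω ∈ K}).toReal ≥ 1 - ε)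
    (hAI0 : ∀ f : E₁ → ℝ, ∀ g : E₂ → ℝ,
      UniformContinuous f → UniformContinuous g →
      (∃ C, ∀ x, |f x| ≤ C) → (∃ C, ∀ y, |g y| ≤ C) →
      Tendsto (fun n =>
          (∫ ω, f (X n ω) * g (Y n ω) ∂P)
            - (∫ ω, f (X n ω) ∂P) * (∫ ω, g (Y n ω) ∂P))
        atTop (nhds 0)) :
    ∀ h : E₁ × E₂ → ℝ,
      UniformContinuous h → (∃ C, ∀ z, |h z| ≤ C) →
      Tendsto (fun n =>
          (∫ ω, h (X n ω, Y n ω) ∂P)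
            - ∫ z, h z ∂((P.map (X n)).prod (P.map (Y n))))
        atTop (nhds 0) := by
  intro h hUC hbdd
  classical
  obtain ⟨C₀, hC₀⟩ := hbdd
  set C := max C₀ 0 with hCdef
  have hC : ∀ z, |h z| ≤ C := fun z => (hC₀ z).trans (le_max_left _ _)
  have hC0 : 0 ≤ C := le_max_right _ _
  rw [NormedAddCommGroup.tendsto_nhds_zero]
  intro η hη
  set ε := min (1/2 : ℝ) (η / (8 * (2*C+3))) with hεdef
  have hε : 0 < ε := lt_min (by norm_num) (by positivity)
  have hεhalf : ε ≤ 1/2 := min_le_left _ _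
  have hεη : 8 * (2*C+3) * ε ≤ η := by
    have h1 := min_le_right (1/2 : ℝ) (η / (8*(2*C+3)))
    have h2 : (0:ℝ) < 8 * (2*C+3) := by positivity
    rw [hεdef]
    calc 8 * (2*C+3) * min (1/2 : ℝ) (η / (8 * (2*C+3)))
        ≤ 8 * (2*C+3) * (η / (8 * (2*C+3))) := by
          exact mul_le_mul_of_nonneg_left h1 h2.le
      _ = η := by field_simp
  obtain ⟨K₁, hK₁c, hK₁⟩ := htightX ε hε
  obtain ⟨K₂, hK₂c, hK₂⟩ := htightY ε hε
  have hK₁ne : K₁.Nonempty := by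
    rcases Set.eq_empty_or_nonempty K₁ with he | hne
    · exfalso
      have h0 := hK₁ 0
      rw [he] at h0
      simp only [Set.mem_empty_iff_false, Set.setOf_false, measure_empty,
        ENNReal.toReal_zero, ge_iff_le] at h0
      linarith
    · exact hne
  have hK₂ne : K₂.Nonempty := by
    rcases Set.eq_empty_or_nonempty K₂ with he | hne
    · exfalso
      have h0 := hK₂ 0
      rw [he] at h0
      simp only [Set.mem_empty_iff_false, Set.setOf_false, measure_empty,
        ENNReal.toReal_zero, ge_iff_le] at h0
      linarith
    · exact hne
  obtain ⟨m, f, g, hf, hg, happ⟩ := tensor_approx hK₁c hK₂c h hUC.continuous hε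
  set s : E₁ × E₂ → ℝ := fun z => ∑ i, f i z.1 * g i z.2 with hsdef
  have hs_eq : ∀ x y, s (x, y) = ∑ i, f i x * g i y := fun _ _ => rfl
  have hscont : Continuous s := by
    apply continuous_finset_sum
    intro i _
    exact ((hf i).1.continuous.comp continuous_fst).mul
      ((hg i).1.continuous.comp continuous_snd)
  have hsU : IsOpen {z : E₁ × E₂ | |s z| < C + 2*ε} :=
    isOpen_lt hscont.abs continuous_const
  have hsubU : K₁ ×ˢ K₂ ⊆ {z : E₁ × E₂ | |s z| < C + 2*ε} := by
    rintro ⟨x, y⟩ ⟨hx, hy⟩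
    have h1 := happ x hx y hy
    have h2 := hC (x, y)
    simp only [Set.mem_setOf_eq]
    rw [hs_eq]
    have h3 : |(∑ i, f i x * g i y) - h (x, y)| ≤ ε := by rw [abs_sub_comm]; exact h1
    have h4 : |(∑ i, f i x * g i y)| ≤ |h (x,y)| + ε := by
      calc |(∑ i, f i x * g i y)|
          = |h (x,y) + ((∑ i, f i x * g i y) - h (x,y))| := by ring_nf
        _ ≤ |h (x,y)| + |(∑ i, f i x * g i y) - h (x,y)| := abs_add_le _ _
        _ ≤ |h (x,y)| + ε := by linarith
    linarith
  obtain ⟨r, hr, hthick⟩ := (hK₁c.prod hK₂c).exists_thickening_subset_open hsU hsubU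
  set φ : E₁ → ℝ := fun x => max (1 - infDist x K₁ / r) 0 with hφdef
  set ψ : E₂ → ℝ := fun y => max (1 - infDist y K₂ / r) 0 with hψdef
  have hφuc : UniformContinuous φ :=
    lipschitzWith_max.uniformContinuous.comp
      ((uniformContinuous_const.sub
        ((uniformContinuous_infDist_pt K₁).div_const' r)).prodMk uniformContinuous_const)
  have hψuc : UniformContinuous ψ :=
    lipschitzWith_max.uniformContinuous.comp
      ((uniformContinuous_const.sub
        ((uniformContinuous_infDist_pt K₂).div_const' r)).prodMk uniformContinuous_const)
  have hφ0 : ∀ x, 0 ≤ φ x := fun x => le_max_right _ _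
  have hψ0 : ∀ y, 0 ≤ ψ y := fun y => le_max_right _ _
  have hφ1 : ∀ x, φ x ≤ 1 := fun x => max_le (by
    have := infDist_nonneg (s := K₁) (x := x)
    have hrr : 0 ≤ infDist x K₁ / r := div_nonneg this hr.le
    linarith) zero_le_one
  have hψ1 : ∀ y, ψ y ≤ 1 := fun y => max_le (by
    have := infDist_nonneg (s := K₂) (x := y)
    have hrr : 0 ≤ infDist y K₂ / r := div_nonneg this hr.le
    linarith) zero_le_one
  have hφbuc : BUC φ := ⟨hφuc, 1, zero_le_one, fun x => by
    rw [abs_of_nonneg (hφ0 x)]; exact hφ1 x⟩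
  have hψbuc : BUC ψ := ⟨hψuc, 1, zero_le_one, fun y => by
    rw [abs_of_nonneg (hψ0 y)]; exact hψ1 y⟩
  have hφK : ∀ x ∈ K₁, φ x = 1 := by
    intro x hx
    rw [hφdef]
    simp [infDist_zero_of_mem hx]
  have hψK : ∀ y ∈ K₂, ψ y = 1 := by
    intro y hy
    rw [hψdef]
    simp [infDist_zero_of_mem hy]
  have hφne : ∀ x, φ x ≠ 0 → infDist x K₁ < r := by
    intro x hx
    by_contra hcon
    push_neg at hcon
    apply hx
    rw [hφdef]
    simp only
    rw [max_eq_right]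
    rw [sub_nonpos, le_div_iff₀ hr]
    linarith
  have hψne : ∀ y, ψ y ≠ 0 → infDist y K₂ < r := by
    intro y hy
    by_contra hcon
    push_neg at hcon
    apply hy
    rw [hψdef]
    simp only
    rw [max_eq_right]
    rw [sub_nonpos, le_div_iff₀ hr]
    linarith
  have hstilde_bd : ∀ z : E₁ × E₂, |s z * (φ z.1 * ψ z.2)| ≤ C + 2*ε := by
    intro z
    by_cases hz1 : φ z.1 = 0
    · rw [hz1]; simp; positivity
    by_cases hz2 : ψ z.2 = 0
    · rw [hz2]; simp; positivity
    have hd1 := hφne _ hz1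
    have hd2 := hψne _ hz2
    obtain ⟨p, hp, hdp⟩ := mem_thickening_iff.mp
      ((mem_thickening_iff_infDist_lt hK₁ne).mpr hd1)
    obtain ⟨q, hq, hdq⟩ := mem_thickening_iff.mp
      ((mem_thickening_iff_infDist_lt hK₂ne).mpr hd2)
    have hzU : z ∈ thickening r (K₁ ×ˢ K₂) :=
      mem_thickening_iff.mpr ⟨(p, q), ⟨hp, hq⟩, by
        rw [Prod.dist_eq]; exact max_lt hdp hdq⟩
    have hsz : |s z| < C + 2*ε := hthick hzU
    have habs : |φ z.1 * ψ z.2| ≤ 1 := by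
      rw [abs_mul, abs_of_nonneg (hφ0 _), abs_of_nonneg (hψ0 _)]
      exact mul_le_one₀ (hφ1 _) (hψ0 _) (hψ1 _)
    calc |s z * (φ z.1 * ψ z.2)| = |s z| * |φ z.1 * ψ z.2| := abs_mul _ _
      _ ≤ |s z| * 1 := mul_le_mul_of_nonneg_left habs (abs_nonneg _)
      _ ≤ C + 2*ε := by rw [mul_one]; exact hsz.le
  set F : Fin m → E₁ → ℝ := fun i x => f i x * φ x with hFdef
  set G : Fin m → E₂ → ℝ := fun i y => g i y * ψ y with hGdef
  have hFbuc : ∀ i, BUC (F i) := fun i => (hf i).mul hφbuc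
  have hGbuc : ∀ i, BUC (G i) := fun i => (hg i).mul hψbuc
  have hst_eq : ∀ z : E₁ × E₂, (∑ i, F i z.1 * G i z.2) = s z * (φ z.1 * ψ z.2) := by
    intro z
    rw [hsdef]
    simp only [hFdef, hGdef]
    rw [Finset.sum_mul]
    exact Finset.sum_congr rfl fun i _ => by ring
  -- the AI-0 part tends to zero
  have hb : Tendsto (fun n => ∑ i, ((∫ ω, F i (X n ω) * G i (Y n ω) ∂P)
      - (∫ ω, F i (X n ω) ∂P) * (∫ ω, G i (Y n ω) ∂P))) atTop (nhds 0) := by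
    have ht := tendsto_finset_sum (Finset.univ : Finset (Fin m)) (fun i _ =>
      hAI0 (F i) (G i) (hFbuc i).1 (hGbuc i).1
        ((hFbuc i).2.imp fun _ hc => hc.2) ((hGbuc i).2.imp fun _ hc => hc.2))
    simpa using ht
  have hbev := (NormedAddCommGroup.tendsto_nhds_zero.mp hb) (η/2) (by positivity)
  filter_upwards [hbev] with n hbn
  rw [Real.norm_eq_abs] at hbn ⊢
  -- instances for the product measure
  haveI hPX : IsProbabilityMeasure (P.map (X n)) :=
    Measure.isProbabilityMeasure_map (hX n).aemeasurable
  haveI hPY : IsProbabilityMeasure (P.map (Y n)) :=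
    Measure.isProbabilityMeasure_map (hY n).aemeasurable
  set π : Measure (E₁ × E₂) := (P.map (X n)).prod (P.map (Y n)) with hπdef
  haveI : IsProbabilityMeasure π := by rw [hπdef]; infer_instance
  have hmeasK₁ : MeasurableSet K₁ := hK₁c.isClosed.measurableSet
  have hmeasK₂ : MeasurableSet K₂ := hK₂c.isClosed.measurableSet
  -- measurability of compositions
  have hXYm : Measurable (fun ω => (X n ω, Y n ω)) := (hX n).prodMk (hY n)
  -- bounds for F i, G i
  have hFbd : ∀ i, ∀ x, |F i x| ≤ (hFbuc i).2.choose := fun i => (hFbuc i).2.choose_spec.2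
  have hGbd : ∀ i, ∀ y, |G i y| ≤ (hGbuc i).2.choose := fun i => (hGbuc i).2.choose_spec.2
  -- integrabilities on Ω
  have hInth : Integrable (fun ω => h (X n ω, Y n ω)) P :=
    integrable_of_bdd P ((hUC.continuous.measurable.comp hXYm).aestronglyMeasurable) C
      (fun ω => hC _)
  have hIntFG : ∀ i, Integrable (fun ω => F i (X n ω) * G i (Y n ω)) P := by
    intro i
    refine integrable_of_bdd P ?_ ((hFbuc i).2.choose * (hGbuc i).2.choose) ?_
    · exact (((hFbuc i).1.continuous.measurable.comp (hX n)).mul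
        ((hGbuc i).1.continuous.measurable.comp (hY n))).aestronglyMeasurable
    · intro ω
      rw [abs_mul]
      exact mul_le_mul (hFbd i _) (hGbd i _) (abs_nonneg _) ((hFbuc i).2.choose_spec.1)
  have hIntS : Integrable (fun ω => ∑ i, F i (X n ω) * G i (Y n ω)) P :=
    integrable_finset_sum _ (fun i _ => hIntFG i)
  -- integabilities on the product space
  have hsmemπ : ∀ i, Integrable (fun z : E₁ × E₂ => F i z.1 * G i z.2) π := by
    intro i
    refine integrable_of_bdd π ?_ ((hFbuc i).2.choose * (hGbuc i).2.choose) ?_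
    · exact (((hFbuc i).1.continuous.comp continuous_fst).mul
        ((hGbuc i).1.continuous.comp continuous_snd)).aestronglyMeasurable
    · intro z
      rw [abs_mul]
      exact mul_le_mul (hFbd i _) (hGbd i _) (abs_nonneg _) ((hFbuc i).2.choose_spec.1)
  have hInthπ : Integrable h π :=
    integrable_of_bdd π hUC.continuous.aestronglyMeasurable C hC
  have hIntSπ : Integrable (fun z : E₁ × E₂ => ∑ i, F i z.1 * G i z.2) π :=
    integrable_finset_sum _ (fun i _ => hsmemπ i)
  -- key integral identities
  have E1 : ∫ ω, (h (X n ω, Y n ω) - ∑ i, F i (X n ω) * G i (Y n ω)) ∂P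
      = (∫ ω, h (X n ω, Y n ω) ∂P) - ∑ i, ∫ ω, F i (X n ω) * G i (Y n ω) ∂P := by
    rw [integral_sub hInth hIntS, integral_finset_sum _ (fun i _ => hIntFG i)]
  have E2 : ∫ z, (h z - ∑ i, F i z.1 * G i z.2) ∂π
      = (∫ z, h z ∂π) - ∑ i, (∫ ω, F i (X n ω) ∂P) * (∫ ω, G i (Y n ω) ∂P) := by
    rw [integral_sub hInthπ hIntSπ, integral_finset_sum _ (fun i _ => hsmemπ i)]
    congr 1
    refine Finset.sum_congr rfl fun i _ => ?_
    rw [hπdef, integral_prod_mul (μ := P.map (X n)) (ν := P.map (Y n)) (F i) (G i),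
      integral_map (hX n).aemeasurable (hFbuc i).1.continuous.aestronglyMeasurable,
      integral_map (hY n).aemeasurable (hGbuc i).1.continuous.aestronglyMeasurable]
  have E3 : (∑ i, ((∫ ω, F i (X n ω) * G i (Y n ω) ∂P)
        - (∫ ω, F i (X n ω) ∂P) * (∫ ω, G i (Y n ω) ∂P)))
      = (∑ i, ∫ ω, F i (X n ω) * G i (Y n ω) ∂P)
        - ∑ i, (∫ ω, F i (X n ω) ∂P) * (∫ ω, G i (Y n ω) ∂P) :=
    Finset.sum_sub_distrib _ _
  -- error bounds
  set D := 2*C + 2*ε with hDdef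
  have hD0 : 0 ≤ D := by rw [hDdef]; positivity
  have hglob : ∀ z : E₁ × E₂, |h z - ∑ i, F i z.1 * G i z.2| ≤ D := by
    intro z
    rw [hst_eq z]
    calc |h z - s z * (φ z.1 * ψ z.2)|
        ≤ |h z| + |s z * (φ z.1 * ψ z.2)| := by
          rw [sub_eq_add_neg]
          exact (abs_add_le _ _).trans (by rw [abs_neg])
      _ ≤ C + (C + 2*ε) := add_le_add (hC z) (hstilde_bd z)
      _ = D := by rw [hDdef]; ring
  have hloc : ∀ z ∈ K₁ ×ˢ K₂, |h z - ∑ i, F i z.1 * G i z.2| ≤ ε := by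
    rintro ⟨x, y⟩ ⟨hx, hy⟩
    rw [hst_eq (x, y)]
    simp only
    rw [hφK x hx, hψK y hy]
    rw [mul_one, mul_one, hs_eq]
    exact happ x hx y hy
  -- tail estimates on Ω
  have hc1 : (P ((X n ⁻¹' K₁)ᶜ)).toReal ≤ ε :=
    compl_toReal_le P (hX n hmeasK₁) (hK₁ n)
  have hc2 : (P ((Y n ⁻¹' K₂)ᶜ)).toReal ≤ ε :=
    compl_toReal_le P (hY n hmeasK₂) (hK₂ n)
  set G' : Set Ω := (X n ⁻¹' K₁) ∩ (Y n ⁻¹' K₂) with hG'def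
  have hG'meas : MeasurableSet G' := (hX n hmeasK₁).inter (hY n hmeasK₂)
  have hG'c : (P G'ᶜ).toReal ≤ 2*ε := by
    have hsub : G'ᶜ ⊆ (X n ⁻¹' K₁)ᶜ ∪ (Y n ⁻¹' K₂)ᶜ := by
      rw [hG'def, Set.compl_inter]
    have hle : P G'ᶜ ≤ P ((X n ⁻¹' K₁)ᶜ) + P ((Y n ⁻¹' K₂)ᶜ) :=
      (measure_mono hsub).trans (measure_union_le _ _)
    calc (P G'ᶜ).toReal
        ≤ (P ((X n ⁻¹' K₁)ᶜ) + P ((Y n ⁻¹' K₂)ᶜ)).toReal :=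
          ENNReal.toReal_mono (by finiteness) hle
      _ = (P ((X n ⁻¹' K₁)ᶜ)).toReal + (P ((Y n ⁻¹' K₂)ᶜ)).toReal :=
          ENNReal.toReal_add (measure_ne_top _ _) (measure_ne_top _ _)
      _ ≤ 2*ε := by linarith
  -- tail estimate on the product space
  have hπc : (π ((K₁ ×ˢ K₂)ᶜ)).toReal ≤ 2*ε := by
    have hsub2 : (K₁ ×ˢ K₂)ᶜ ⊆ (K₁ᶜ ×ˢ (Set.univ : Set E₂)) ∪ ((Set.univ : Set E₁) ×ˢ K₂ᶜ) := by
      intro z hz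
      simp only [Set.mem_compl_iff, Set.mem_prod, Set.mem_union, Set.mem_univ,
        and_true, true_and] at *
      tauto
    have hle : π ((K₁ ×ˢ K₂)ᶜ) ≤ P ((X n ⁻¹' K₁)ᶜ) + P ((Y n ⁻¹' K₂)ᶜ) := by
      refine (measure_mono hsub2).trans ((measure_union_le _ _).trans (le_of_eq ?_))
      rw [hπdef, Measure.prod_prod, Measure.prod_prod, measure_univ, measure_univ,
        one_mul, mul_one,
        Measure.map_apply (hX n) hmeasK₁.compl, Measure.map_apply (hY n) hmeasK₂.compl,
        Set.preimage_compl, Set.preimage_compl]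
    calc (π ((K₁ ×ˢ K₂)ᶜ)).toReal
        ≤ (P ((X n ⁻¹' K₁)ᶜ) + P ((Y n ⁻¹' K₂)ᶜ)).toReal :=
          ENNReal.toReal_mono (by finiteness) hle
      _ = (P ((X n ⁻¹' K₁)ᶜ)).toReal + (P ((Y n ⁻¹' K₂)ᶜ)).toReal :=
          ENNReal.toReal_add (measure_ne_top _ _) (measure_ne_top _ _)
      _ ≤ 2*ε := by linarith
  -- bound the two error integrals
  have hA1 : |∫ ω, (h (X n ω, Y n ω) - ∑ i, F i (X n ω) * G i (Y n ω)) ∂P|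
      ≤ ε + D * (2*ε) := by
    have := abs_integral_le_of_bounds P (hInth.sub hIntS) hG'meas hε.le hD0
      (fun ω hω => hloc (X n ω, Y n ω) ⟨hω.1, hω.2⟩)
      (fun ω => hglob (X n ω, Y n ω))
    refine this.trans ?_
    have := mul_le_mul_of_nonneg_left hG'c hD0
    linarith
  have hA2 : |∫ z, (h z - ∑ i, F i z.1 * G i z.2) ∂π| ≤ ε + D * (2*ε) := by
    have := abs_integral_le_of_bounds π (hInthπ.sub hIntSπ)
      (hmeasK₁.prod hmeasK₂) hε.le hD0 hloc hglob
    refine this.trans ?_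
    have := mul_le_mul_of_nonneg_left hπc hD0
    linarith
  -- assemble
  have key : (∫ ω, h (X n ω, Y n ω) ∂P) - (∫ z, h z ∂π)
      = (∫ ω, (h (X n ω, Y n ω) - ∑ i, F i (X n ω) * G i (Y n ω)) ∂P)
        - (∫ z, (h z - ∑ i, F i z.1 * G i z.2) ∂π)
        + (∑ i, ((∫ ω, F i (X n ω) * G i (Y n ω) ∂P)
            - (∫ ω, F i (X n ω) ∂P) * (∫ ω, G i (Y n ω) ∂P))) := by
    rw [E1, E2, E3]
    ring
  rw [key]
  set U := ∫ ω, (h (X n ω, Y n ω) - ∑ i, F i (X n ω) * G i (Y n ω)) ∂P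
  set V := ∫ z, (h z - ∑ i, F i z.1 * G i z.2) ∂π
  set B := ∑ i, ((∫ ω, F i (X n ω) * G i (Y n ω) ∂P)
      - (∫ ω, F i (X n ω) ∂P) * (∫ ω, G i (Y n ω) ∂P))
  clear_value U V B
  exact final_arith hε hεhalf hεη hC0 hDdef hA1 hA2 hbn
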